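/- Greedy exchange property for p-representations: let R be the greedy left-to-right p-representation of T with respect to P (extend the current block while the extension still occurs in P, else start a new block), and let R* be any p-representation of T. Then for every t ≥ 1, the end position of the t-th block of R is at least the end position of the t-th block of R*; hence the greedy representation has the minimum number of blocks. -/

import Mathlib

/-- Greedy exchange property for p-representations: if `R` is the greedy
left-to-right p-representation of `T` with respect to `P` (no block can be extended
by the next character of the text and still occur in `P`) and `R'` is any
p-representation of `T`, then for every `t` the end position of the `t`-th block of
`R` is at least the end position of the `t`-th block of `R'`; hence `R` has the
minimum number of blocks. -/
theorem greedy_exchange_property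
    {α : Type*} (P T : List α) (hocc : ∀ a ∈ T, a ∈ P)
    (R : List (List α)) (hjoin : R.flatten = T)
    (hval : ∀ B ∈ R, B ≠ [] ∧ B <:+: P)
    (hgreedy : ∀ i, (h : i + 1 < R.length) → ∀ c ∈ (R.get ⟨i + 1, h⟩).head?,
        ¬ (R.get ⟨i, by omega⟩ ++ [c]) <:+: P)
    (R' : List (List α)) (hjoin' : R'.flatten = T)
    (hval' : ∀ B ∈ R', B ≠ [] ∧ B <:+: P) :
    (∀ t, ((R'.take t).flatten).length ≤ ((R.take t).flatten).length) ∧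
    R.length ≤ R'.length := by
  replace hjoin : R.flatten = T := hjoin
  replace hjoin' : R'.flatten = T := hjoin'
  have mono : ∀ (L : List (List α)) (t : ℕ),
      ((L.take t).flatten).length ≤ ((L.take (t+1)).flatten).length := by
    intro L t
    rw [List.take_succ]
    simp
  have prefT : ∀ (L : List (List α)) (t : ℕ), (L.take t).flatten <+: L.flatten := by
    intro L t
    exact ⟨(L.drop t).flatten, by rw [← List.flatten_append, List.take_append_drop]⟩
  have dropj : ∀ (L : List (List α)) (t : ℕ),
      L.flatten.drop ((L.take t).flatten).length = (L.drop t).flatten := by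
    intro L t
    rw [show L.flatten = (L.take t).flatten ++ (L.drop t).flatten from by
        rw [← List.flatten_append, List.take_append_drop]]
    exact List.drop_left
  have key : ∀ t, ((R'.take t).flatten).length ≤ ((R.take t).flatten).length := by
    intro t
    induction t with
    | zero => simp
    | succ t ih =>
      by_cases ht' : t < R'.length
      · by_cases ht : t < R.length
        · -- main case
          set a := ((R.take t).flatten).length with ha
          set a' := ((R'.take t).flatten).length with ha'
          by_contra hcon
          push_neg at hcon
          rw [List.take_succ, List.take_succ,
            List.getElem?_eq_getElem ht, List.getElem?_eq_getElem ht'] at hcon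
          simp only [Option.toList_some, List.flatten_append, List.flatten_cons,
            List.flatten_nil, List.append_nil, List.length_append] at hcon
          -- hcon : a + (R[t]).length < a' + (R'[t]).length
          have hale : a ≤ T.length := by
            have := (prefT R t).length_le; rw [hjoin] at this; exact this
          have ha'le : a' + (R'[t]'ht').length ≤ T.length := by
            have h0 := (prefT R' (t+1)).length_le
            rw [hjoin', List.take_succ, List.getElem?_eq_getElem ht'] at h0
            simp only [Option.toList_some, List.flatten_append, List.flatten_cons,
              List.flatten_nil, List.append_nil, List.length_append] at h0
            omega
          have eR : T.drop a = (R.drop t).flatten := by rw [← hjoin]; exact dropj R t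
          have eR' : T.drop a' = (R'.drop t).flatten := by rw [← hjoin']; exact dropj R' t
          rw [List.drop_eq_getElem_cons ht'] at eR'
          simp only [List.flatten_cons] at eR'
          have ht1 : t + 1 < R.length := by
            by_contra h1
            have hdrop : R.drop (t+1) = [] := List.drop_eq_nil_of_le (by omega)
            rw [List.drop_eq_getElem_cons ht, hdrop] at eR
            simp only [List.flatten_cons, List.flatten_nil, List.append_nil] at eR
            have : T.length - a = (R[t]'ht).length := by rw [← eR]; simp
            omega
          obtain ⟨c, cs, hcs⟩ := List.exists_cons_of_ne_nil
            (hval (R[t+1]'ht1) (List.getElem_mem ht1)).1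
          rw [List.drop_eq_getElem_cons ht, List.drop_eq_getElem_cons ht1, hcs] at eR
          simp only [List.flatten_cons] at eR
          -- eR : T.drop a = R[t] ++ (c :: cs ++ (R.drop (t+2)).flatten)
          have pre : (R[t]'ht) ++ [c] <+: T.drop a := by
            refine ⟨cs ++ (R.drop (t+1+1)).flatten, ?_⟩
            rw [eR]; simp
          have e2 : T.drop a = ((R'[t]'ht').drop (a - a')) ++ (R'.drop (t+1)).flatten := by
            have hdd : T.drop a = (T.drop a').drop (a - a') := by
              rw [List.drop_drop]
              congr 1
              omega
            rw [hdd, eR', List.drop_append,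
              show a - a' - (R'[t]'ht').length = 0 from by omega, List.drop_zero]
          have pre2 : (R[t]'ht) ++ [c] <+: (R'[t]'ht').drop (a - a') :=
            List.prefix_of_prefix_length_le (e2 ▸ pre) (List.prefix_append _ _)
              (by simp; omega)
          have hinf : (R[t]'ht) ++ [c] <:+: P :=
            (pre2.isInfix.trans (List.drop_suffix _ _).isInfix).trans
              (hval' (R'[t]'ht') (List.getElem_mem ht')).2
          refine hgreedy t ht1 c ?_ ?_
          · simp [List.get_eq_getElem, hcs]
          · simpa using hinf
        · -- R exhausted: R.take (t+1) = R
          push_neg at ht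
          rw [List.take_of_length_le (by omega : R.length ≤ t + 1), hjoin]
          have := (prefT R' (t+1)).length_le
          rw [hjoin'] at this
          exact this
      · -- R' exhausted
        push_neg at ht'
        rw [List.take_of_length_le (by omega : R'.length ≤ t + 1),
          ← List.take_of_length_le ht']
        exact le_trans ih (mono R t)
  refine ⟨fun t => key t, ?_⟩
  by_contra h
  push_neg at h
  set n := R'.length with hn
  have h1 := key n
  rw [List.take_length, hjoin'] at h1
  have h2 : T.length = ((R.take n).flatten).length + ((R.drop n).flatten).length := by
    rw [← hjoin]
    conv_lhs => rw [show R.flatten = (R.take n).flatten ++ (R.drop n).flatten from by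
      rw [← List.flatten_append, List.take_append_drop]]
    simp
  have h3 : 0 < ((R.drop n).flatten).length := by
    rw [List.drop_eq_getElem_cons h]
    have hne := (hval (R[n]'h) (List.getElem_mem h)).1
    simp only [List.flatten_cons, List.length_append]
    have : 0 < (R[n]'h).length := List.length_pos_iff.mpr hne
    omega
  omega
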